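/- (Reduced-form (numerator) identity in the LATE identification.) In the IV setup, for every u ∈ 𝒰 such that P(T = 1, U = u) > 0 and P(T = 0, U = u) > 0: E[Y ∣ T = 1, U = u] − E[Y ∣ T = 0, U = u] = E[(Y_{1,u} − Y_{0,u}) · 1{T̃_{1,u} = 1, T̃_{0,u} = 0}]. -/

import Mathlib

open MeasureTheory ProbabilityTheory

/-- Conditional expectation `E[Z ∣ B] = E[Z·1_B] / P(B)`. -/
noncomputable def cexp {Ω : Type*} [MeasurableSpace Ω] (μ : Measure Ω) (Z : Ω → ℝ)
    (B : Set Ω) : ℝ :=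
  (∫ ω in B, Z ω ∂μ) / (μ B).toReal

/-- Reduced-form (numerator) identity in the LATE identification: in the IV setup,
for every `u` with `P(T = 1, U = u) > 0` and `P(T = 0, U = u) > 0`,
`E[Y ∣ T = 1, U = u] − E[Y ∣ T = 0, U = u]
  = E[(Y_{1,u} − Y_{0,u}) · 1{T̃_{1,u} = 1, T̃_{0,u} = 0}]`. -/
theorem reduced_form_identity
    {Ω 𝒰 : Type*} [MeasurableSpace Ω] (μ : Measure Ω) [IsProbabilityMeasure μ]
    [Countable 𝒰] [MeasurableSpace 𝒰] [MeasurableSingletonClass 𝒰]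
    (T : Ω → Bool) (U : Ω → 𝒰)
    (Ttil : Bool → 𝒰 → Ω → Bool) (Ypo : Bool → 𝒰 → Ω → ℝ)
    (Tperc : Ω → Bool) (Y : Ω → ℝ)
    (hT : Measurable T) (hU : Measurable U)
    (hTtil : ∀ (t : Bool) (u : 𝒰), Measurable (Ttil t u))
    (hYpo : ∀ (t : Bool) (u : 𝒰), Measurable (Ypo t u))
    (hbdd : ∃ C : ℝ, ∀ (t : Bool) (u : 𝒰) (ω : Ω), |Ypo t u ω| ≤ C)
    (hTperc : ∀ ω, Tperc ω = Ttil (T ω) (U ω) ω)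
    (hYobs : ∀ ω, Y ω = Ypo (Tperc ω) (U ω) ω)
    (hunconf : ∀ u : 𝒰,
      IndepFun (fun ω => (Ypo false u ω, Ypo true u ω, Ttil false u ω, Ttil true u ω))
        (fun ω => (T ω, U ω)) μ)
    (hmono : ∀ (u : 𝒰) (ω : Ω), Ttil false u ω ≤ Ttil true u ω) :
    ∀ u : 𝒰, 0 < μ ({ω | T ω = true} ∩ {ω | U ω = u}) →
      0 < μ ({ω | T ω = false} ∩ {ω | U ω = u}) →
      cexp μ Y ({ω | T ω = true} ∩ {ω | U ω = u})
          - cexp μ Y ({ω | T ω = false} ∩ {ω | U ω = u})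
        = ∫ ω in {ω | Ttil true u ω = true ∧ Ttil false u ω = false},
            (Ypo true u ω - Ypo false u ω) ∂μ := by
  classical
  intro u hpos1 hpos0
  obtain ⟨C, hC⟩ := hbdd
  -- the latent outcome functions
  set f : Bool → Ω → ℝ := fun t ω => Ypo (Ttil t u ω) u ω with hf
  have hfeq : ∀ t ω, f t ω = if Ttil t u ω = true then Ypo true u ω else Ypo false u ω := by
    intro t ω
    cases h : Ttil t u ω <;> simp [hf, h]
  have hfm : ∀ t, Measurable (f t) := by
    intro t
    have : f t = fun ω => if Ttil t u ω = true then Ypo true u ω else Ypo false u ω :=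
      funext (hfeq t)
    rw [this]
    exact Measurable.ite (hTtil t u (measurableSet_singleton true)) (hYpo true u) (hYpo false u)
  have hfint : ∀ t, Integrable (f t) μ := by
    intro t
    exact (integrable_const C).mono' (hfm t).aestronglyMeasurable
      (Filter.Eventually.of_forall fun ω => by simpa using hC (Ttil t u ω) u ω)
  -- key identity: set integral of Y over {T = t, U = u} factorizes
  have key : ∀ t : Bool,
      (∫ ω in ({ω | T ω = t} ∩ {ω | U ω = u}), Y ω ∂μ)
        = (μ ({ω | T ω = t} ∩ {ω | U ω = u})).toReal * ∫ ω, f t ω ∂μ := by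
    intro t
    set A : Set Ω := {ω | T ω = t} ∩ {ω | U ω = u} with hA
    have hAm : MeasurableSet A :=
      (hT (measurableSet_singleton t)).inter (hU (measurableSet_singleton u))
    have h1' : ∫ ω in A, Y ω ∂μ = ∫ ω in A, f t ω ∂μ := by
      apply setIntegral_congr_fun hAm
      intro ω hω
      have hT' : T ω = t := hω.1
      have hU' : U ω = u := hω.2
      simp only [hf]
      rw [hYobs ω, hTperc ω, hT', hU']
    set ind : Ω → ℝ := fun ω => if T ω = t ∧ U ω = u then 1 else 0 with hind
    have hindm : Measurable ind := by
      apply Measurable.ite _ measurable_const measurable_const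
      exact (hT (measurableSet_singleton t)).inter (hU (measurableSet_singleton u))
    -- independence of f t and ind
    have hindep : IndepFun (f t) ind μ := by
      have hg : Measurable (fun p : ℝ × ℝ × Bool × Bool =>
          if (bif t then p.2.2.2 else p.2.2.1) = true then p.2.1 else p.1) := by
        cases t
        · simp only [Bool.cond_false]
          exact Measurable.ite (measurable_snd.snd.fst (measurableSet_singleton true))
            measurable_snd.fst measurable_fst
        · simp only [Bool.cond_true]
          exact Measurable.ite (measurable_snd.snd.snd (measurableSet_singleton true))
            measurable_snd.fst measurable_fst
      have hψ : Measurable (fun q : Bool × 𝒰 => if q.1 = t ∧ q.2 = u then (1 : ℝ) else 0) := by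
        apply Measurable.ite _ measurable_const measurable_const
        exact (measurable_fst (measurableSet_singleton t)).inter
          (measurable_snd (measurableSet_singleton u))
      have h := (hunconf u).comp hg hψ
      have e1 : (fun p : ℝ × ℝ × Bool × Bool =>
          if (bif t then p.2.2.2 else p.2.2.1) = true then p.2.1 else p.1) ∘
          (fun ω => (Ypo false u ω, Ypo true u ω, Ttil false u ω, Ttil true u ω)) = f t := by
        funext ω
        cases t <;> simp [Function.comp, hfeq]
      have e2 : (fun q : Bool × 𝒰 => if q.1 = t ∧ q.2 = u then (1 : ℝ) else 0) ∘
          (fun ω => (T ω, U ω)) = ind := by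
        funext ω; rfl
      rwa [e1, e2] at h
    have hmul : ∫ ω, f t ω * ind ω ∂μ = (∫ ω, f t ω ∂μ) * ∫ ω, ind ω ∂μ :=
      hindep.integral_fun_mul_eq_mul_integral (hfm t).aestronglyMeasurable hindm.aestronglyMeasurable
    have hindval : ∫ ω, ind ω ∂μ = (μ A).toReal := by
      have e : ind = A.indicator (fun _ => (1 : ℝ)) := by
        funext ω
        by_cases h : ω ∈ A
        · rw [Set.indicator_of_mem h]
          exact if_pos ⟨h.1, h.2⟩
        · rw [Set.indicator_of_notMem h]
          exact if_neg fun hc => h ⟨hc.1, hc.2⟩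
      rw [e, integral_indicator_const _ hAm, smul_eq_mul, mul_one]; rfl
    have h2' : ∫ ω in A, f t ω ∂μ = ∫ ω, f t ω * ind ω ∂μ := by
      rw [← integral_indicator hAm]
      congr 1
      funext ω
      by_cases h : ω ∈ A
      · rw [Set.indicator_of_mem h, hind]
        simp only
        rw [if_pos ⟨h.1, h.2⟩, mul_one]
      · rw [Set.indicator_of_notMem h, hind]
        simp only
        rw [if_neg fun hc => h ⟨hc.1, hc.2⟩, mul_zero]
    rw [h1', h2', hmul, hindval, mul_comm]
  -- conditional expectations equal plain expectations of latent outcomes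
  have hcexp : ∀ t : Bool, 0 < μ ({ω | T ω = t} ∩ {ω | U ω = u}) →
      cexp μ Y ({ω | T ω = t} ∩ {ω | U ω = u}) = ∫ ω, f t ω ∂μ := by
    intro t hpos
    have hne : (μ ({ω | T ω = t} ∩ {ω | U ω = u})).toReal ≠ 0 :=
      (ENNReal.toReal_pos hpos.ne' (measure_ne_top μ _)).ne'
    rw [cexp, key t, mul_comm, mul_div_assoc, div_self hne, mul_one]
  rw [hcexp true hpos1, hcexp false hpos0]
  -- pointwise identity
  have hSm : MeasurableSet {ω | Ttil true u ω = true ∧ Ttil false u ω = false} :=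
    ((hTtil true u) (measurableSet_singleton true)).inter
      ((hTtil false u) (measurableSet_singleton false))
  rw [← integral_sub (hfint true) (hfint false), ← integral_indicator hSm]
  congr 1
  funext ω
  rw [Set.indicator_apply]
  simp only [Set.mem_setOf_eq]
  rw [hfeq, hfeq]
  by_cases ha : Ttil true u ω = true
  · by_cases hb : Ttil false u ω = false
    · simp [ha, hb]
    · have hb' : Ttil false u ω = true := by simpa using hb
      simp [ha, hb']
  · have ha' : Ttil true u ω = false := by simpa using ha
    have hb : Ttil false u ω = false := by
      have h := hmono u ω
      rw [ha'] at h
      cases hb0 : Ttil false u ω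
      · rfl
      · rw [hb0] at h
        exact absurd h (by decide)
    simp [ha', hb]
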